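/- Let (Ω, P) carry a measure-preserving ℤ-action (translations) and a random set A_t^∞, and suppose: for finite K_1, K_2 ⊆ H at horizontal distance > 2n, the approximating events C_i = {A_t^n(i) ∩ K_i = ξ_i} built from Poisson processes in disjoint spatial regions are independent conditionally on the confinement events D_i, with P(D_1^c ∪ D_2^c) → 0 and P(B_i △ C_i) → 0 as n → ∞, where B_i = {A_t^∞ ∩ K_i = ξ_i}. Then lim_{n→∞} P(B_1 ∩ (B_2 shifted by 2n)) = P(B_1)·P(B_2), i.e. A_t^∞ is strongly mixing, hence ergodic, under integer horizontal translations. -/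

import Mathlib

open MeasureTheory Filter
open scoped ENNReal symmDiff

lemma stmt19_aux_abs {Ω : Type*} [MeasurableSpace Ω] (μ : Measure Ω) [IsFiniteMeasure μ]
    (S T : Set Ω) : |(μ S).toReal - (μ T).toReal| ≤ (μ (S ∆ T)).toReal := by
  have key : ∀ (A B : Set Ω), (μ A).toReal - (μ B).toReal ≤ (μ (A ∆ B)).toReal := by
    intro A B
    have h1 : μ A ≤ μ B + μ (A ∆ B) := by
      refine le_trans (measure_mono ?_) (measure_union_le _ _)
      intro x hx
      by_cases hB : x ∈ B
      · exact Or.inl hB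
      · exact Or.inr (Or.inl ⟨hx, hB⟩)
    have h2 : (μ A).toReal ≤ (μ B).toReal + (μ (A ∆ B)).toReal := by
      rw [← ENNReal.toReal_add (measure_ne_top μ _) (measure_ne_top μ _)]
      exact ENNReal.toReal_mono (by finiteness) h1
    linarith
  rw [abs_sub_le_iff]
  exact ⟨key S T, by simpa [symmDiff_comm] using key T S⟩

lemma stmt19_aux_sub {Ω : Type*} [MeasurableSpace Ω] (μ : Measure Ω) [IsFiniteMeasure μ]
    {S T U : Set Ω} (h : S ∆ T ⊆ U) :
    |(μ S).toReal - (μ T).toReal| ≤ (μ U).toReal :=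
  le_trans (stmt19_aux_abs μ S T) (ENNReal.toReal_mono (measure_ne_top μ _) (measure_mono h))

lemma stmt19_aux_tend {f g : ℕ → ℝ} {L : ℝ} (h : ∀ n, |f n - L| ≤ g n)
    (hg : Tendsto g atTop (nhds 0)) : Tendsto f atTop (nhds L) := by
  have h0 : Tendsto (fun n => f n - L) atTop (nhds 0) :=
    squeeze_zero_norm (fun n => by simpa using h n) hg
  have := h0.add_const L
  simpa using this

/-- Strong mixing of the stationary DLA under integer horizontal
translations. Let `θ` generate a measure-preserving ℤ-action, `B₁, B₂` cylinder
events, and for each `n` let `C₁ n, C₂ n` be the approximating events (built from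
Poisson processes in disjoint spatial regions for configurations at distance `> 2n`)
and `D₁ n, D₂ n` the confinement events. If `C₁ n` and `C₂ n` are independent
conditionally on `D₁ n ∩ D₂ n`, with `P(D₁ᶜ ∪ D₂ᶜ) → 0` and
`P(B₁ △ C₁ n) → 0`, `P(θ^{-2n} B₂ △ C₂ n) → 0`, then
`lim_n P(B₁ ∩ θ^{-2n} B₂) = P(B₁)·P(B₂)`, i.e. the process is strongly mixing
(hence ergodic) under integer horizontal translations. -/
theorem stmt19 {Ω : Type*} [MeasurableSpace Ω] (μ : Measure Ω) [IsProbabilityMeasure μ]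
    (θ : Ω → Ω) (hθ : MeasurePreserving θ μ μ)
    (B₁ B₂ : Set Ω) (hB₁ : MeasurableSet B₁) (hB₂ : MeasurableSet B₂)
    (C₁ C₂ D₁ D₂ : ℕ → Set Ω)
    (hmC₁ : ∀ n, MeasurableSet (C₁ n)) (hmC₂ : ∀ n, MeasurableSet (C₂ n))
    (hmD₁ : ∀ n, MeasurableSet (D₁ n)) (hmD₂ : ∀ n, MeasurableSet (D₂ n))
    (hind : ∀ n, μ (C₁ n ∩ C₂ n ∩ (D₁ n ∩ D₂ n)) * μ (D₁ n ∩ D₂ n)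
        = μ (C₁ n ∩ (D₁ n ∩ D₂ n)) * μ (C₂ n ∩ (D₁ n ∩ D₂ n)))
    (hD : Tendsto (fun n => μ ((D₁ n)ᶜ ∪ (D₂ n)ᶜ)) atTop (nhds 0))
    (hC₁ : Tendsto (fun n => μ (B₁ ∆ C₁ n)) atTop (nhds 0))
    (hC₂ : Tendsto (fun n => μ ((θ^[2 * n] ⁻¹' B₂) ∆ C₂ n)) atTop (nhds 0)) :
    Tendsto (fun n => μ (B₁ ∩ θ^[2 * n] ⁻¹' B₂)) atTop (nhds (μ B₁ * μ B₂)) := by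
  -- pass to real numbers
  rw [← ENNReal.tendsto_toReal_iff (fun n => measure_ne_top μ _)
      (ENNReal.mul_ne_top (measure_ne_top μ _) (measure_ne_top μ _))]
  rw [ENNReal.toReal_mul]
  set m : Set Ω → ℝ := fun s => (μ s).toReal with hm
  set Bn : ℕ → Set Ω := fun n => θ^[2 * n] ⁻¹' B₂ with hBn
  have hBnμ : ∀ n, m (Bn n) = m B₂ := fun n => by
    simp only [hm, hBn, (hθ.iterate (2 * n)).measure_preimage hB₂.nullMeasurableSet]
  -- real versions of the hypotheses
  have rD : Tendsto (fun n => m ((D₁ n)ᶜ ∪ (D₂ n)ᶜ)) atTop (nhds 0) := by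
    simpa using (ENNReal.tendsto_toReal_iff (fun n => measure_ne_top μ _)
      ENNReal.zero_ne_top).2 hD
  have rC₁ : Tendsto (fun n => m (B₁ ∆ C₁ n)) atTop (nhds 0) := by
    simpa using (ENNReal.tendsto_toReal_iff (fun n => measure_ne_top μ _)
      ENNReal.zero_ne_top).2 hC₁
  have rC₂ : Tendsto (fun n => m (Bn n ∆ C₂ n)) atTop (nhds 0) := by
    simpa using (ENNReal.tendsto_toReal_iff (fun n => measure_ne_top μ _)
      ENNReal.zero_ne_top).2 hC₂
  set d : ℕ → ℝ := fun n => m (D₁ n ∩ D₂ n) with hd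
  set a : ℕ → ℝ := fun n => m (C₁ n ∩ C₂ n ∩ (D₁ n ∩ D₂ n)) with ha
  set p : ℕ → ℝ := fun n => m (C₁ n ∩ (D₁ n ∩ D₂ n)) with hp
  set q : ℕ → ℝ := fun n => m (C₂ n ∩ (D₁ n ∩ D₂ n)) with hq
  have hind' : ∀ n, a n * d n = p n * q n := fun n => by
    simp only [ha, hd, hp, hq, hm, ← ENNReal.toReal_mul, hind n]
  -- d → 1
  have hd1 : Tendsto d atTop (nhds 1) := by
    refine stmt19_aux_tend (g := fun n => m ((D₁ n)ᶜ ∪ (D₂ n)ᶜ)) (fun n => ?_) rD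
    have : (1 : ℝ) = m Set.univ := by simp [hm]
    rw [this]
    refine stmt19_aux_sub μ ?_
    intro x hx
    rcases Set.mem_symmDiff.1 hx with ⟨_, hu⟩ | ⟨_, h⟩
    · exact absurd trivial hu
    · by_cases h1 : x ∈ D₁ n
      · exact Or.inr fun h2 => h ⟨h1, h2⟩
      · exact Or.inl h1
  -- p → m B₁
  have hpB : Tendsto p atTop (nhds (m B₁)) := by
    refine stmt19_aux_tend
      (g := fun n => m (B₁ ∆ C₁ n) + m ((D₁ n)ᶜ ∪ (D₂ n)ᶜ)) (fun n => ?_)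
      (by simpa using rC₁.add rD)
    have h1 : |p n - m (C₁ n)| ≤ m ((D₁ n)ᶜ ∪ (D₂ n)ᶜ) := by
      refine stmt19_aux_sub μ ?_
      intro x hx
      rcases Set.mem_symmDiff.1 hx with ⟨⟨_, _⟩, h⟩ | ⟨hc, h⟩
      · exact absurd ‹x ∈ C₁ n› h
      · by_cases h1 : x ∈ D₁ n
        · exact Or.inr fun h2 => h ⟨hc, h1, h2⟩
        · exact Or.inl h1
    have h2 : |m (C₁ n) - m B₁| ≤ m (B₁ ∆ C₁ n) := by
      simpa [symmDiff_comm] using stmt19_aux_abs μ (C₁ n) B₁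
    calc |p n - m B₁| ≤ |p n - m (C₁ n)| + |m (C₁ n) - m B₁| := abs_sub_le _ _ _
      _ ≤ m (B₁ ∆ C₁ n) + m ((D₁ n)ᶜ ∪ (D₂ n)ᶜ) := by linarith
  -- q → m B₂
  have hqB : Tendsto q atTop (nhds (m B₂)) := by
    refine stmt19_aux_tend
      (g := fun n => m (Bn n ∆ C₂ n) + m ((D₁ n)ᶜ ∪ (D₂ n)ᶜ)) (fun n => ?_)
      (by simpa using rC₂.add rD)
    have h1 : |q n - m (C₂ n)| ≤ m ((D₁ n)ᶜ ∪ (D₂ n)ᶜ) := by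
      refine stmt19_aux_sub μ ?_
      intro x hx
      rcases Set.mem_symmDiff.1 hx with ⟨⟨_, _⟩, h⟩ | ⟨hc, h⟩
      · exact absurd ‹x ∈ C₂ n› h
      · by_cases h1 : x ∈ D₁ n
        · exact Or.inr fun h2 => h ⟨hc, h1, h2⟩
        · exact Or.inl h1
    have h2 : |m (C₂ n) - m B₂| ≤ m (Bn n ∆ C₂ n) := by
      rw [← hBnμ n]
      simpa [symmDiff_comm] using stmt19_aux_abs μ (C₂ n) (Bn n)
    calc |q n - m B₂| ≤ |q n - m (C₂ n)| + |m (C₂ n) - m B₂| := abs_sub_le _ _ _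
      _ ≤ m (Bn n ∆ C₂ n) + m ((D₁ n)ᶜ ∪ (D₂ n)ᶜ) := by linarith
  -- a → m B₁ * m B₂, using a n = p n * q n / d n eventually
  have haB : Tendsto a atTop (nhds (m B₁ * m B₂)) := by
    have hdiv : Tendsto (fun n => p n * q n / d n) atTop (nhds (m B₁ * m B₂)) := by
      rw [← div_one (m B₁ * m B₂)]
      exact (hpB.mul hqB).div hd1 one_ne_zero
    have hev : ∀ᶠ n in atTop, p n * q n / d n = a n := by
      filter_upwards [hd1.eventually (eventually_gt_nhds (show (1:ℝ)/2 < 1 by norm_num))] with n hn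
      rw [← hind' n, mul_div_assoc, div_self (by linarith : d n ≠ 0), mul_one]
    exact hdiv.congr' hev
  -- conclude
  refine stmt19_aux_tend
    (g := fun n => |a n - m B₁ * m B₂|
      + (m (B₁ ∆ C₁ n) + m (Bn n ∆ C₂ n) + m ((D₁ n)ᶜ ∪ (D₂ n)ᶜ))) (fun n => ?_) ?_
  · have key : |m (B₁ ∩ Bn n) - a n|
        ≤ m (B₁ ∆ C₁ n) + m (Bn n ∆ C₂ n) + m ((D₁ n)ᶜ ∪ (D₂ n)ᶜ) := by
      have hsub : (B₁ ∩ Bn n) ∆ (C₁ n ∩ C₂ n ∩ (D₁ n ∩ D₂ n))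
          ⊆ (B₁ ∆ C₁ n) ∪ (Bn n ∆ C₂ n) ∪ ((D₁ n)ᶜ ∪ (D₂ n)ᶜ) := by
        intro x hx
        rcases Set.mem_symmDiff.1 hx with ⟨⟨h1, h2⟩, h⟩ | ⟨⟨⟨hc1, hc2⟩, hd1', hd2'⟩, h⟩
        · by_cases hx1 : x ∈ C₁ n
          · by_cases hx2 : x ∈ C₂ n
            · by_cases hx3 : x ∈ D₁ n
              · exact Or.inr (Or.inr fun h2 => h ⟨⟨hx1, hx2⟩, hx3, h2⟩)
              · exact Or.inr (Or.inl hx3)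
            · exact Or.inl (Or.inr (Set.mem_symmDiff.2 (Or.inl ⟨h2, hx2⟩)))
          · exact Or.inl (Or.inl (Set.mem_symmDiff.2 (Or.inl ⟨h1, hx1⟩)))
        · by_cases hx1 : x ∈ B₁
          · by_cases hx2 : x ∈ Bn n
            · exact absurd ⟨hx1, hx2⟩ h
            · exact Or.inl (Or.inr (Set.mem_symmDiff.2 (Or.inr ⟨hc2, hx2⟩)))
          · exact Or.inl (Or.inl (Set.mem_symmDiff.2 (Or.inr ⟨hc1, hx1⟩)))
      have hμ : μ ((B₁ ∆ C₁ n) ∪ (Bn n ∆ C₂ n) ∪ ((D₁ n)ᶜ ∪ (D₂ n)ᶜ))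
          ≤ μ (B₁ ∆ C₁ n) + μ (Bn n ∆ C₂ n) + μ ((D₁ n)ᶜ ∪ (D₂ n)ᶜ) :=
        le_trans (measure_union_le _ _) (add_le_add (measure_union_le _ _) le_rfl)
      refine le_trans (stmt19_aux_sub μ hsub) ?_
      rw [show m (B₁ ∆ C₁ n) + m (Bn n ∆ C₂ n) + m ((D₁ n)ᶜ ∪ (D₂ n)ᶜ)
          = (μ (B₁ ∆ C₁ n) + μ (Bn n ∆ C₂ n) + μ ((D₁ n)ᶜ ∪ (D₂ n)ᶜ)).toReal by
        simp [hm, ENNReal.toReal_add, measure_ne_top]]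
      exact ENNReal.toReal_mono (by finiteness) hμ
    calc |m (B₁ ∩ Bn n) - m B₁ * m B₂|
        ≤ |m (B₁ ∩ Bn n) - a n| + |a n - m B₁ * m B₂| := abs_sub_le _ _ _
      _ ≤ |a n - m B₁ * m B₂|
            + (m (B₁ ∆ C₁ n) + m (Bn n ∆ C₂ n) + m ((D₁ n)ᶜ ∪ (D₂ n)ᶜ)) := by linarith
  · have h1 : Tendsto (fun n => |a n - m B₁ * m B₂|) atTop (nhds 0) := by
      simpa using (haB.sub_const (m B₁ * m B₂)).abs
    simpa using (h1.add ((rC₁.add rC₂).add rD))
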